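/- Let T be a radially symmetric proper infinite rooted tree with radially symmetric weight σ. Then Mod_{1,σ}(Γ_∞) = inf{ Σ_{e∈C} σ(e) : C is a cut for Γ_∞ }, where a cut for Γ_∞ is a set C of edges such that every infinite descending path γ ∈ Γ_∞ contains at least one edge of C, and Σ_{e∈C} σ(e) is taken in [0,∞]. -/

import Mathlib

open scoped ENNReal NNReal

/-- A proper infinite rooted tree, modeled as a prefix-closed set of finite lists of
naturals in which every node has at least one and finitely many children. -/
structure PTree where
  mem : List ℕ → Prop
  root_mem : mem []
  prefix_closed : ∀ ⦃l₁ l₂ : List ℕ⦄, l₁ <+: l₂ → mem l₂ → mem l₁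
  child_exists : ∀ ⦃l⦄, mem l → ∃ a, mem (l ++ [a])
  finite_children : ∀ ⦃l⦄, mem l → {a : ℕ | mem (l ++ [a])}.Finite

/-- The initial segment of length `n` of `f : ℕ → ℕ`, as a list. -/
def seg (f : ℕ → ℕ) (n : ℕ) : List ℕ := (List.range n).map f

namespace PTree

variable (T : PTree)

/-- The edges of the tree: the nonempty lists in `T`. -/
def Edge : Type := {e : List ℕ // T.mem e ∧ e ≠ []}

/-- The family `Γ_∞` of infinite descending paths: functions all of whose
finite initial segments lie in `T`. -/
def GammaInf : Set (ℕ → ℕ) := {f | ∀ n, T.mem (seg f n)}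

/-- `ρ`-length of the infinite descending path determined by `f`: the sum of `ρ`
over the nonempty initial segments of `f`. -/
noncomputable def lenInf (ρ : List ℕ → ℝ≥0) (f : ℕ → ℕ) : ℝ≥0∞ :=
  ∑' n : ℕ, (ρ (seg f (n + 1)) : ℝ≥0∞)

/-- `ρ`-length of the finite descending path `γ_e` consisting of the nonempty
prefixes of the edge `e`. -/
noncomputable def lenFin (ρ : List ℕ → ℝ≥0) (e : List ℕ) : ℝ≥0∞ :=
  ∑ k ∈ Finset.range e.length, (ρ (e.take (k + 1)) : ℝ≥0∞)

/-- Admissible densities for the family `Γ_n` (identified with the shell `S_n`). -/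
def AdmFin (n : ℕ) : Set (List ℕ → ℝ≥0) :=
  {ρ | ∀ e : List ℕ, T.mem e → e.length = n → 1 ≤ lenFin ρ e}

/-- Admissible densities for the family `Γ_∞`. -/
def AdmInf : Set (List ℕ → ℝ≥0) :=
  {ρ | ∀ f ∈ T.GammaInf, 1 ≤ lenInf ρ f}

/-- The `p`-energy of a density `ρ` with respect to the weight `σ`. -/
noncomputable def energy (p : ℝ) (σ ρ : List ℕ → ℝ≥0) : ℝ≥0∞ :=
  ∑' e : T.Edge, (σ e.1 : ℝ≥0∞) * (ρ e.1 : ℝ≥0∞) ^ p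

/-- The `∞`-energy of a density `ρ` with respect to the weight `σ`. -/
noncomputable def energyTop (σ ρ : List ℕ → ℝ≥0) : ℝ≥0∞ :=
  ⨆ e : T.Edge, (σ e.1 : ℝ≥0∞) * (ρ e.1 : ℝ≥0∞)

/-- The `p`-modulus of the family `Γ_n`. -/
noncomputable def ModFin (p : ℝ) (σ : List ℕ → ℝ≥0) (n : ℕ) : ℝ≥0∞ :=
  ⨅ ρ ∈ T.AdmFin n, T.energy p σ ρ

/-- The `p`-modulus of the family `Γ_∞`. -/
noncomputable def ModInf (p : ℝ) (σ : List ℕ → ℝ≥0) : ℝ≥0∞ :=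
  ⨅ ρ ∈ T.AdmInf, T.energy p σ ρ

/-- The `∞`-modulus of the family `Γ_∞`. -/
noncomputable def ModTop (σ : List ℕ → ℝ≥0) : ℝ≥0∞ :=
  ⨅ ρ ∈ T.AdmInf, T.energyTop σ ρ

end PTree

namespace PTree

/-- A tree is radially symmetric if the number of children of an edge depends
only on its generation. -/
def RadiallySymmetric (T : PTree) : Prop :=
  ∀ ⦃e e' : List ℕ⦄, T.mem e → T.mem e' → e.length = e'.length →
    Nat.card {a : ℕ // T.mem (e ++ [a])} = Nat.card {a : ℕ // T.mem (e' ++ [a])}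

end PTree

namespace Stmt9Aux

open Finset

variable (T : PTree)

/-- nodes of depth `n` -/
def level (n : ℕ) : Set (List ℕ) := {l | T.mem l ∧ l.length = n}

lemma level_finite (n : ℕ) : (level T n).Finite := by
  induction n with
  | zero =>
    apply Set.Finite.subset (Set.finite_singleton ([] : List ℕ))
    rintro l ⟨-, hl⟩
    simp [List.length_eq_zero_iff.mp hl]
  | succ n ih =>
    have hsub : level T (n+1) ⊆
        ⋃ v ∈ level T n, (fun a => v ++ [a]) '' {a | T.mem (v ++ [a])} := by
      rintro l ⟨hm, hl⟩
      have hne : l ≠ [] := by intro h; simp [h] at hl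
      have hpref : l.dropLast <+: l := List.dropLast_prefix l
      have hmv : T.mem l.dropLast := T.prefix_closed hpref hm
      refine Set.mem_biUnion (⟨hmv, by simp [hl]⟩ : l.dropLast ∈ level T n) ?_
      refine ⟨l.getLast hne, ?_, List.dropLast_append_getLast hne⟩
      show T.mem (l.dropLast ++ [l.getLast hne])
      rw [List.dropLast_append_getLast hne]; exact hm
    exact Set.Finite.subset
      (Set.Finite.biUnion ih fun v hv => ((T.finite_children hv.1).image _)) hsub

lemma level_nonempty (n : ℕ) : (level T n).Nonempty := by
  induction n with
  | zero => exact ⟨[], T.root_mem, rfl⟩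
  | succ n ih =>
    obtain ⟨v, hv, hl⟩ := ih
    obtain ⟨a, ha⟩ := T.child_exists hv
    exact ⟨v ++ [a], ha, by simp [hl]⟩

noncomputable def levelF (n : ℕ) : Finset (List ℕ) := (level_finite T n).toFinset

lemma mem_levelF {T : PTree} {n : ℕ} {l : List ℕ} : l ∈ levelF T n ↔ T.mem l ∧ l.length = n := by
  simp [levelF, level]

open Classical in
noncomputable def childF (v : List ℕ) : Finset ℕ :=
  if h : T.mem v then (T.finite_children h).toFinset else ∅

lemma mem_childF {T : PTree} {v : List ℕ} (hv : T.mem v) {a : ℕ} :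
    a ∈ childF T v ↔ T.mem (v ++ [a]) := by
  classical
  simp [childF, hv]

noncomputable def ref : (n : ℕ) → {l : List ℕ // T.mem l ∧ l.length = n}
  | 0 => ⟨[], T.root_mem, rfl⟩
  | n+1 =>
    let p := ref n
    ⟨p.1 ++ [(T.child_exists p.2.1).choose], (T.child_exists p.2.1).choose_spec,
      by simp [p.2.2]⟩

noncomputable def c (n : ℕ) : ℕ := Nat.card {a : ℕ // T.mem ((ref T n).1 ++ [a])}

variable {T}

lemma card_childF (hT : T.RadiallySymmetric) {v : List ℕ} (hv : T.mem v) :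
    (childF T v).card = c T v.length := by
  have h1 : Nat.card {a : ℕ // T.mem (v ++ [a])} = c T v.length :=
    hT hv (ref T v.length).2.1 ((ref T v.length).2.2).symm
  classical
  rw [childF, dif_pos hv, ← Set.ncard_eq_toFinset_card _ (T.finite_children hv),
    ← Nat.card_coe_set_eq]
  exact h1

lemma c_pos (n : ℕ) : 0 < c T n := by
  have h := T.child_exists (ref T n).2.1
  haveI : Nonempty {a : ℕ // T.mem ((ref T n).1 ++ [a])} := ⟨⟨h.choose, h.choose_spec⟩⟩
  haveI : Finite {a : ℕ // T.mem ((ref T n).1 ++ [a])} :=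
    (T.finite_children (ref T n).2.1).to_subtype
  exact Nat.card_pos

variable (T)

noncomputable def Nn (n : ℕ) : ℕ := ∏ k ∈ Finset.range n, c T k

lemma Nn_pos (n : ℕ) : 0 < Nn T n := Finset.prod_pos fun k _ => c_pos k

end Stmt9Aux
namespace Stmt9Aux

open Finset

variable {T : PTree}

lemma disj_images {n : ℕ} : Set.PairwiseDisjoint (↑(levelF T n))
    (fun v => (childF T v).image (fun a => v ++ [a])) := by
  intro v1 _ v2 _ hne
  simp only [Function.onFun]
  rw [Finset.disjoint_left]
  intro l h1 h2
  simp only [Finset.mem_image] at h1 h2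
  obtain ⟨a, -, rfl⟩ := h1
  obtain ⟨b, -, hb⟩ := h2
  exact hne (List.append_inj_left' hb.symm rfl)

lemma levelF_succ_eq (n : ℕ) :
    levelF T (n+1) = (levelF T n).biUnion (fun v => (childF T v).image (fun a => v ++ [a])) := by
  ext l
  simp only [Finset.mem_biUnion, Finset.mem_image, mem_levelF]
  constructor
  · rintro ⟨hm, hl⟩
    have hne : l ≠ [] := by intro h; simp [h] at hl
    have hmv : T.mem l.dropLast := T.prefix_closed (List.dropLast_prefix l) hm
    refine ⟨l.dropLast, ⟨hmv, by simp [hl]⟩, l.getLast hne, ?_, List.dropLast_append_getLast hne⟩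
    rw [mem_childF hmv, List.dropLast_append_getLast hne]
    exact hm
  · rintro ⟨v, ⟨hv, hvl⟩, a, ha, rfl⟩
    exact ⟨(mem_childF hv).1 ha, by simp [hvl]⟩

lemma sum_level_succ {M : Type*} [AddCommMonoid M] (g : List ℕ → M) (n : ℕ) :
    ∑ l ∈ levelF T (n+1), g l = ∑ v ∈ levelF T n, ∑ a ∈ childF T v, g (v ++ [a]) := by
  rw [levelF_succ_eq, Finset.sum_biUnion disj_images]
  refine Finset.sum_congr rfl fun v _ => ?_
  rw [Finset.sum_image]
  intro a _ b _ hab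
  simpa using List.append_inj_right' hab rfl

lemma levelF_zero : levelF T 0 = {([] : List ℕ)} := by
  ext l
  simp only [mem_levelF, Finset.mem_singleton, List.length_eq_zero_iff]
  constructor
  · rintro ⟨-, h⟩; exact h
  · rintro rfl; exact ⟨T.root_mem, rfl⟩

lemma card_levelF (hT : T.RadiallySymmetric) (n : ℕ) : (levelF T n).card = Nn T n := by
  induction n with
  | zero => simp [levelF_zero, Nn]
  | succ n ih =>
    rw [Finset.card_eq_sum_ones, sum_level_succ (fun _ => (1 : ℕ)) n]
    have : ∀ v ∈ levelF T n, ∑ _a ∈ childF T v, 1 = c T n := by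
      intro v hv
      rw [Finset.sum_const, smul_eq_mul, mul_one,
        card_childF hT (mem_levelF.mp hv).1, (mem_levelF.mp hv).2]
    rw [Finset.sum_congr rfl this, Finset.sum_const, smul_eq_mul, ih, Nn, Nn,
      Finset.prod_range_succ]

end Stmt9Aux
namespace Stmt9Aux

open Finset

variable {T : PTree}

lemma lenFin_concat (ρ : List ℕ → ℝ≥0) (v : List ℕ) (a : ℕ) :
    PTree.lenFin ρ (v ++ [a]) = PTree.lenFin ρ v + (ρ (v ++ [a]) : ℝ≥0∞) := by
  unfold PTree.lenFin
  have hl : (v ++ [a]).length = v.length + 1 := by simp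
  rw [hl, Finset.sum_range_succ]
  congr 1
  · refine Finset.sum_congr rfl fun k hk => ?_
    rw [Finset.mem_range] at hk
    rw [List.take_append_of_le_length (by omega)]
  · rw [List.take_of_length_le (le_of_eq hl)]

lemma lenFin_mono (ρ : List ℕ → ℝ≥0) {l₁ l₂ : List ℕ} (h : l₁ <+: l₂) :
    PTree.lenFin ρ l₁ ≤ PTree.lenFin ρ l₂ := by
  unfold PTree.lenFin
  have heq : ∀ k ∈ Finset.range l₁.length,
      (ρ (l₁.take (k+1)) : ℝ≥0∞) = (ρ (l₂.take (k+1)) : ℝ≥0∞) := by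
    intro k hk
    rw [Finset.mem_range] at hk
    have h1 : l₁ = l₂.take l₁.length := List.prefix_iff_eq_take.mp h
    rw [h1, List.take_take, min_eq_left (by omega)]
  rw [Finset.sum_congr rfl heq]
  exact Finset.sum_le_sum_of_subset (Finset.range_subset_range.2 h.length_le)

variable (T)

noncomputable def Rsh (ρ : List ℕ → ℝ≥0) (n : ℕ) : ℝ≥0∞ :=
  ∑ e ∈ levelF T n, (ρ e : ℝ≥0∞)

noncomputable def Esh (ρ : List ℕ → ℝ≥0) (n : ℕ) : ℝ≥0∞ :=
  ∑ l ∈ levelF T n, PTree.lenFin ρ l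

noncomputable def Bsh (ρ : List ℕ → ℝ≥0) (n : ℕ) : ℝ≥0∞ :=
  ∑ k ∈ Finset.range n, ((Nn T (k+1) : ℝ≥0∞))⁻¹ * Rsh T ρ (k+1)

variable {T}

lemma Esh_succ (hT : T.RadiallySymmetric) (ρ : List ℕ → ℝ≥0) (n : ℕ) :
    Esh T ρ (n+1) = (c T n : ℝ≥0∞) * Esh T ρ n + Rsh T ρ (n+1) := by
  rw [Esh, sum_level_succ, Rsh, sum_level_succ]
  have hstep : ∀ v ∈ levelF T n, ∑ a ∈ childF T v, PTree.lenFin ρ (v ++ [a])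
      = (c T n : ℝ≥0∞) * PTree.lenFin ρ v + ∑ a ∈ childF T v, (ρ (v ++ [a]) : ℝ≥0∞) := by
    intro v hv
    obtain ⟨hvm, hvl⟩ := mem_levelF.mp hv
    calc ∑ a ∈ childF T v, PTree.lenFin ρ (v ++ [a])
        = ∑ a ∈ childF T v, (PTree.lenFin ρ v + (ρ (v ++ [a]) : ℝ≥0∞)) :=
          Finset.sum_congr rfl fun a _ => lenFin_concat ρ v a
      _ = (c T n : ℝ≥0∞) * PTree.lenFin ρ v + ∑ a ∈ childF T v, (ρ (v ++ [a]) : ℝ≥0∞) := by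
          rw [Finset.sum_add_distrib, Finset.sum_const, card_childF hT hvm, hvl, nsmul_eq_mul]
  rw [Finset.sum_congr rfl hstep, Finset.sum_add_distrib, ← Finset.mul_sum, Esh]

lemma Esh_eq (hT : T.RadiallySymmetric) (ρ : List ℕ → ℝ≥0) (n : ℕ) :
    Esh T ρ n = (Nn T n : ℝ≥0∞) * Bsh T ρ n := by
  induction n with
  | zero =>
    simp [Esh, Bsh, levelF_zero, PTree.lenFin]
  | succ n ih =>
    have hN1 : (Nn T (n+1) : ℝ≥0∞) = (Nn T n : ℝ≥0∞) * (c T n : ℝ≥0∞) := by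
      rw [show Nn T (n+1) = Nn T n * c T n from by rw [Nn, Nn, Finset.prod_range_succ],
        Nat.cast_mul]
    have hne0 : (Nn T (n+1) : ℝ≥0∞) ≠ 0 := by
      simp only [ne_eq, Nat.cast_eq_zero]
      exact (Nn_pos T (n+1)).ne'
    have hnetop : (Nn T (n+1) : ℝ≥0∞) ≠ ⊤ := ENNReal.natCast_ne_top _
    rw [Esh_succ hT, ih, show Bsh T ρ (n+1) = Bsh T ρ n
        + ((Nn T (n+1) : ℝ≥0∞))⁻¹ * Rsh T ρ (n+1) from by
          rw [Bsh, Bsh, Finset.sum_range_succ], mul_add]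
    have h2 : (Nn T (n+1) : ℝ≥0∞) * (((Nn T (n+1) : ℝ≥0∞))⁻¹ * Rsh T ρ (n+1))
        = Rsh T ρ (n+1) := by
      rw [← mul_assoc, ENNReal.mul_inv_cancel hne0 hnetop, one_mul]
    rw [h2, hN1]
    ring

lemma exists_small (hT : T.RadiallySymmetric) (ρ : List ℕ → ℝ≥0) (n : ℕ) :
    ∃ l ∈ levelF T n, PTree.lenFin ρ l ≤ Bsh T ρ n := by
  have hne : (levelF T n).Nonempty := by
    obtain ⟨l, hl⟩ := level_nonempty T n
    exact ⟨l, mem_levelF.mpr hl⟩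
  apply ENNReal.exists_le_of_sum_le hne
  rw [Finset.sum_const, card_levelF hT, nsmul_eq_mul, ← Esh_eq hT]
  exact le_rfl

end Stmt9Aux
namespace Stmt9Aux

open Finset

variable {T : PTree}

/-- A good node: in the tree, with path sum at most `S`. -/
def isGood (T : PTree) (ρ : List ℕ → ℝ≥0) (S : ℝ≥0∞) (l : List ℕ) : Prop :=
  T.mem l ∧ PTree.lenFin ρ l ≤ S

/-- Extendability: good extensions of every additional length exist. -/
def extendable (T : PTree) (ρ : List ℕ → ℝ≥0) (S : ℝ≥0∞) (l : List ℕ) : Prop :=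
  ∀ n : ℕ, ∃ l', isGood T ρ S l' ∧ l'.length = l.length + n ∧ l <+: l'

lemma isGood_prefix {ρ : List ℕ → ℝ≥0} {S : ℝ≥0∞} {l₁ l₂ : List ℕ} (h : l₁ <+: l₂)
    (hg : isGood T ρ S l₂) : isGood T ρ S l₁ :=
  ⟨T.prefix_closed h hg.1, (lenFin_mono ρ h).trans hg.2⟩

lemma extendable_step {ρ : List ℕ → ℝ≥0} {S : ℝ≥0∞} {l : List ℕ} (hl : T.mem l)
    (he : extendable T ρ S l) :
    ∃ a, isGood T ρ S (l ++ [a]) ∧ extendable T ρ S (l ++ [a]) := by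
  classical
  by_contra hcon
  push_neg at hcon
  set Q : ℕ → ℕ → Prop := fun a k => ∃ l', isGood T ρ S l' ∧
    l'.length = (l.length + 1) + k ∧ (l ++ [a]) <+: l' with hQ
  have Qmono : ∀ a j k, j ≤ k → Q a k → Q a j := by
    rintro a j k hjk ⟨l', hg, hlen, hpre⟩
    refine ⟨l'.take (l.length + 1 + j), isGood_prefix (List.take_prefix _ _) hg, ?_, ?_⟩
    · rw [List.length_take]; omega
    · have h1 : l ++ [a] = l'.take (l.length + 1) := by
        have := List.prefix_iff_eq_take.mp hpre
        rw [this]; congr 1; simp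
      rw [h1]
      exact List.take_prefix_take_left (by omega)
  have key : ∀ a, ∃ k, ¬ Q a k := by
    intro a
    by_cases hg : isGood T ρ S (l ++ [a])
    · have hne := hcon a hg
      rw [extendable] at hne; push_neg at hne
      obtain ⟨k, hk⟩ := hne
      refine ⟨k, ?_⟩
      rintro ⟨l', h1, h2, h3⟩
      exact hk l' h1 (by simpa using h2) h3
    · exact ⟨0, fun ⟨l', h1, _, h3⟩ => hg (isGood_prefix h3 h1)⟩
  choose k hk using key
  obtain ⟨l', hg', hlen', hpre'⟩ := he ((childF T l).sup k + 1)
  obtain ⟨t, ht⟩ := hpre'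
  have htne : t ≠ [] := by
    rintro rfl
    rw [List.append_nil] at ht
    rw [ht] at hlen'
    omega
  obtain ⟨a, t', rfl⟩ : ∃ a t', t = a :: t' := by
    cases t with
    | nil => exact absurd rfl htne
    | cons a t' => exact ⟨a, t', rfl⟩
  have hpre2 : l ++ [a] <+: l' := by
    rw [← ht]
    exact ⟨t', by simp⟩
  have hmem : a ∈ childF T l := (mem_childF hl).2 (T.prefix_closed hpre2 hg'.1)
  have hQs : Q a ((childF T l).sup k) := ⟨l', hg', by omega, hpre2⟩
  exact hk a (Qmono a _ _ (Finset.le_sup hmem) hQs)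

/-- The König path. -/
noncomputable def kp (ρ : List ℕ → ℝ≥0) (S : ℝ≥0∞) (h0 : extendable T ρ S []) :
    (n : ℕ) → {l : List ℕ // (isGood T ρ S l ∧ extendable T ρ S l) ∧ l.length = n}
  | 0 => ⟨[], ⟨⟨T.root_mem, by simp [PTree.lenFin]⟩, h0⟩, rfl⟩
  | n+1 =>
    let p := kp ρ S h0 n
    let h := extendable_step p.2.1.1.1 p.2.1.2
    ⟨p.1 ++ [h.choose], ⟨h.choose_spec.1, h.choose_spec.2⟩, by simp [p.2.2]⟩

lemma kp_succ (ρ : List ℕ → ℝ≥0) (S : ℝ≥0∞) (h0 : extendable T ρ S []) (n : ℕ) :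
    ∃ a : ℕ, (kp ρ S h0 (n+1)).1 = (kp ρ S h0 n).1 ++ [a] :=
  ⟨_, rfl⟩

lemma exists_path (ρ : List ℕ → ℝ≥0) (S : ℝ≥0∞)
    (hS : ∀ n, ∃ l ∈ levelF T n, PTree.lenFin ρ l ≤ S) :
    ∃ f ∈ T.GammaInf, PTree.lenInf ρ f ≤ S := by
  have h0 : extendable T ρ S [] := by
    intro n
    obtain ⟨l, hl, hlen⟩ := hS n
    obtain ⟨hm, hln⟩ := mem_levelF.mp hl
    exact ⟨l, ⟨hm, hlen⟩, by simpa using hln, List.nil_prefix⟩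
  set g : ℕ → List ℕ := fun n => (kp ρ S h0 n).1 with hg
  have hglen : ∀ n, (g n).length = n := fun n => (kp ρ S h0 n).2.2
  have hgood : ∀ n, isGood T ρ S (g n) := fun n => (kp ρ S h0 n).2.1.1
  have hgsucc : ∀ n, ∃ a, g (n+1) = g n ++ [a] := fun n => kp_succ ρ S h0 n
  set f : ℕ → ℕ := fun n => (g (n+1)).getLast
    (by have := hglen (n+1); intro h; rw [h] at this; simp at this) with hf
  have hseg : ∀ n, seg f n = g n := by
    intro n
    induction n with
    | zero => simp [seg]; exact (List.length_eq_zero_iff.mp (hglen 0)).symm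
    | succ n ih =>
      have hstep : seg f (n+1) = seg f n ++ [f n] := by
        simp [seg, List.range_succ]
      obtain ⟨a, ha⟩ := hgsucc n
      have hfn : f n = a := by
        simp only [hf, ha]
        exact List.getLast_append _
      rw [hstep, ih, hfn, ← ha]
  refine ⟨f, fun n => ?_, ?_⟩
  · rw [hseg]; exact (hgood n).1
  · rw [PTree.lenInf, ENNReal.tsum_eq_iSup_nat]
    refine iSup_le fun n => ?_
    have hpart : ∑ i ∈ Finset.range n, (ρ (seg f (i+1)) : ℝ≥0∞) = PTree.lenFin ρ (g n) := by
      rw [PTree.lenFin, hglen]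
      refine Finset.sum_congr rfl fun k hk => ?_
      rw [Finset.mem_range] at hk
      rw [← hseg n]
      congr 1
      simp only [seg]
      rw [← List.map_take, List.take_range, min_eq_left (by omega)]
    rw [hpart]
    exact (hgood n).2

end Stmt9Aux
namespace Stmt9Aux

open Finset

variable {T : PTree}

noncomputable def UF (T : PTree) (n : ℕ) : Finset (List ℕ) :=
  (Finset.range n).biUnion (fun k => levelF T (k+1))

lemma mem_UF_props {n : ℕ} {l : List ℕ} (hl : l ∈ UF T n) : T.mem l ∧ l ≠ [] := by
  simp only [UF, Finset.mem_biUnion, Finset.mem_range, mem_levelF] at hl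
  obtain ⟨k, -, h1, h2⟩ := hl
  exact ⟨h1, by intro h; rw [h] at h2; simp at h2⟩

lemma sum_UF (g : List ℕ → ℝ≥0∞) (n : ℕ) :
    ∑ l ∈ UF T n, g l = ∑ k ∈ Finset.range n, ∑ l ∈ levelF T (k+1), g l := by
  rw [UF, Finset.sum_biUnion]
  intro k1 _ k2 _ hne
  simp only [Function.onFun]
  rw [Finset.disjoint_left]
  intro l h1 h2
  have e1 := (mem_levelF.mp h1).2
  have e2 := (mem_levelF.mp h2).2
  exact hne (by omega)

lemma energy_ge_M_mul_B (hT : T.RadiallySymmetric) (σs : ℕ → ℝ≥0) (ρ : List ℕ → ℝ≥0) (n : ℕ) :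
    (⨅ k : ℕ, (σs (k+1) : ℝ≥0∞) * (Nn T (k+1) : ℝ≥0∞)) * Bsh T ρ n
      ≤ T.energy 1 (fun l => σs l.length) ρ := by
  classical
  set M := ⨅ k : ℕ, (σs (k+1) : ℝ≥0∞) * (Nn T (k+1) : ℝ≥0∞) with hM
  have hMk : ∀ k : ℕ, M * ((Nn T (k+1) : ℝ≥0∞))⁻¹ ≤ (σs (k+1) : ℝ≥0∞) := by
    intro k
    have h1 : M ≤ (σs (k+1) : ℝ≥0∞) * (Nn T (k+1) : ℝ≥0∞) := iInf_le _ k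
    have hne0 : (Nn T (k+1) : ℝ≥0∞) ≠ 0 := by
      simp only [ne_eq, Nat.cast_eq_zero]
      exact (Nn_pos T (k+1)).ne'
    have hnetop : (Nn T (k+1) : ℝ≥0∞) ≠ ⊤ := ENNReal.natCast_ne_top _
    calc M * ((Nn T (k+1) : ℝ≥0∞))⁻¹
        ≤ ((σs (k+1) : ℝ≥0∞) * (Nn T (k+1) : ℝ≥0∞)) * ((Nn T (k+1) : ℝ≥0∞))⁻¹ :=
          mul_le_mul_left h1 _
      _ = (σs (k+1) : ℝ≥0∞) := by
          rw [mul_assoc, ENNReal.mul_inv_cancel hne0 hnetop, mul_one]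
  have step1 : M * Bsh T ρ n ≤ ∑ l ∈ UF T n, (σs l.length : ℝ≥0∞) * (ρ l : ℝ≥0∞) := by
    rw [Bsh, Finset.mul_sum, sum_UF]
    refine Finset.sum_le_sum fun k _ => ?_
    rw [Rsh, ← mul_assoc, Finset.mul_sum]
    refine Finset.sum_le_sum fun l hl => ?_
    rw [(mem_levelF.mp hl).2]
    exact mul_le_mul_left (hMk k) _
  refine step1.trans ?_
  have hinj : Function.Injective
      (fun x : {l // l ∈ UF T n} => (⟨x.1, mem_UF_props x.2⟩ : T.Edge)) := by
    intro x y hxy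
    have h2 := congrArg (fun e : T.Edge => e.1) hxy
    exact Subtype.ext h2
  calc ∑ l ∈ UF T n, (σs l.length : ℝ≥0∞) * (ρ l : ℝ≥0∞)
      = ∑ x ∈ (UF T n).attach, (σs x.1.length : ℝ≥0∞) * (ρ x.1 : ℝ≥0∞) :=
        (Finset.sum_attach _ _).symm
    _ = ∑ e ∈ (UF T n).attach.map ⟨_, hinj⟩, (σs e.1.length : ℝ≥0∞) * (ρ e.1 : ℝ≥0∞) := by
        rw [Finset.sum_map]
        rfl
    _ ≤ ∑' e : T.Edge, (σs e.1.length : ℝ≥0∞) * (ρ e.1 : ℝ≥0∞) := ENNReal.sum_le_tsum _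
    _ = T.energy 1 (fun l => σs l.length) ρ := by
        rw [PTree.energy]
        exact tsum_congr fun e => by rw [ENNReal.rpow_one]

lemma cut_le_shell (hT : T.RadiallySymmetric) (σs : ℕ → ℝ≥0) (k : ℕ) :
    ∑' e : (level T (k+1) : Set (List ℕ)), (σs e.1.length : ℝ≥0∞)
      ≤ (σs (k+1) : ℝ≥0∞) * (Nn T (k+1) : ℝ≥0∞) := by
  classical
  have h0 : ∑' e : (level T (k+1) : Set (List ℕ)), (σs e.1.length : ℝ≥0∞)
      = ∑' l : List ℕ, (level T (k+1)).indicator (fun l => (σs l.length : ℝ≥0∞)) l :=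
    _root_.tsum_subtype (level T (k+1)) (fun l => (σs l.length : ℝ≥0∞))
  rw [h0, tsum_eq_sum (s := levelF T (k+1))
    (fun l hl => Set.indicator_of_notMem
      (fun hmem => hl ((level_finite T (k+1)).mem_toFinset.mpr hmem)) _)]
  refine le_of_eq ?_
  calc ∑ l ∈ levelF T (k+1), (level T (k+1)).indicator (fun l => (σs l.length : ℝ≥0∞)) l
      = ∑ _l ∈ levelF T (k+1), (σs (k+1) : ℝ≥0∞) := by
        refine Finset.sum_congr rfl fun l hl => ?_
        rw [Set.indicator_of_mem ((level_finite T (k+1)).mem_toFinset.mp hl)]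
        rw [(mem_levelF.mp hl).2]
    _ = (σs (k+1) : ℝ≥0∞) * (Nn T (k+1) : ℝ≥0∞) := by
        rw [Finset.sum_const, card_levelF hT, nsmul_eq_mul, mul_comm]

lemma mod_le_cut (σs : ℕ → ℝ≥0) {C : Set (List ℕ)}
    (hC1 : ∀ l ∈ C, T.mem l ∧ l ≠ [])
    (hC2 : ∀ f ∈ T.GammaInf, ∃ n : ℕ, 1 ≤ n ∧ seg f n ∈ C) :
    T.ModInf 1 (fun l => σs l.length) ≤ ∑' e : C, (σs e.1.length : ℝ≥0∞) := by
  classical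
  set ρC : List ℕ → ℝ≥0 := fun l => if l ∈ C then 1 else 0 with hρC
  have hadm : ρC ∈ T.AdmInf := by
    intro f hf
    obtain ⟨n, hn1, hnC⟩ := hC2 f hf
    have hterm : (1 : ℝ≥0∞) ≤ ((ρC (seg f ((n-1)+1)) : ℝ≥0) : ℝ≥0∞) := by
      have hn : n - 1 + 1 = n := by omega
      rw [hn, hρC]
      simp [hnC]
    exact hterm.trans (ENNReal.le_tsum (n-1))
  have henergy : T.energy 1 (fun l => σs l.length) ρC ≤ ∑' e : C, (σs e.1.length : ℝ≥0∞) := by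
    have h1 : ∀ e : T.Edge, (σs e.1.length : ℝ≥0∞) * ((ρC e.1 : ℝ≥0) : ℝ≥0∞) ^ (1:ℝ)
        ≤ C.indicator (fun l => (σs l.length : ℝ≥0∞)) e.1 := by
      intro e
      rw [ENNReal.rpow_one, hρC]
      by_cases h : e.1 ∈ C
      · simp [h]
      · simp [h]
    calc T.energy 1 (fun l => σs l.length) ρC
        ≤ ∑' e : T.Edge, C.indicator (fun l => (σs l.length : ℝ≥0∞)) e.1 :=
          ENNReal.tsum_le_tsum h1
      _ ≤ ∑' l : List ℕ, C.indicator (fun l => (σs l.length : ℝ≥0∞)) l := by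
          refine Summable.tsum_le_tsum_of_inj (fun e : T.Edge => e.1) (fun x y h => Subtype.ext h)
            (fun _ _ => zero_le) (fun _ => le_rfl) ENNReal.summable ENNReal.summable
      _ = ∑' e : C, (σs e.1.length : ℝ≥0∞) := (_root_.tsum_subtype _ _).symm
  refine le_trans ?_ henergy
  rw [PTree.ModInf]
  exact iInf₂_le ρC hadm

end Stmt9Aux
/-- for a radially symmetric tree with radially symmetric weight,
the `1`-modulus of `Γ_∞` equals the infimum of `σ(C)` over all cuts `C` for `Γ_∞`. -/
theorem stmt9 (T : PTree) (hT : T.RadiallySymmetric)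
    (σs : ℕ → ℝ≥0) (hσ : ∀ n, 0 < σs n) :
    T.ModInf 1 (fun l => σs l.length) =
      ⨅ C ∈ {C : Set (List ℕ) |
          (∀ l ∈ C, T.mem l ∧ l ≠ []) ∧
          ∀ f ∈ T.GammaInf, ∃ n : ℕ, 1 ≤ n ∧ seg f n ∈ C},
        ∑' e : C, (σs e.1.length : ℝ≥0∞) := by
  classical
  refine le_antisymm ?_ ?_
  · refine le_iInf fun C => le_iInf fun hC => ?_
    exact Stmt9Aux.mod_le_cut σs hC.1 hC.2
  · rw [PTree.ModInf]
    refine le_iInf fun ρ => le_iInf fun hρ => ?_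
    have h1 : (⨅ C ∈ {C : Set (List ℕ) |
          (∀ l ∈ C, T.mem l ∧ l ≠ []) ∧
          ∀ f ∈ T.GammaInf, ∃ n : ℕ, 1 ≤ n ∧ seg f n ∈ C},
        ∑' e : C, (σs e.1.length : ℝ≥0∞))
        ≤ ⨅ k : ℕ, (σs (k+1) : ℝ≥0∞) * (Stmt9Aux.Nn T (k+1) : ℝ≥0∞) := by
      refine le_iInf fun k => ?_
      have hcut : Stmt9Aux.level T (k+1) ∈ {C : Set (List ℕ) |
          (∀ l ∈ C, T.mem l ∧ l ≠ []) ∧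
          ∀ f ∈ T.GammaInf, ∃ n : ℕ, 1 ≤ n ∧ seg f n ∈ C} := by
      
        refine ⟨fun l hl => ⟨hl.1, ?_⟩, fun f hf => ⟨k+1, by omega, hf (k+1), by simp [seg]⟩⟩
        intro h
        rw [h] at hl
        simpa using hl.2
      exact (iInf₂_le _ hcut).trans (Stmt9Aux.cut_le_shell hT σs k)
    refine h1.trans ?_
    have hS1 : (1 : ℝ≥0∞) ≤ ⨆ n, Stmt9Aux.Bsh T ρ n := by
      by_contra hcon
      push_neg at hcon
      have hs : ∀ n, ∃ l ∈ Stmt9Aux.levelF T n,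
          PTree.lenFin ρ l ≤ ⨆ n, Stmt9Aux.Bsh T ρ n := by
        intro n
        obtain ⟨l, hl, hle⟩ := Stmt9Aux.exists_small hT ρ n
        exact ⟨l, hl, hle.trans (le_iSup _ n)⟩
      obtain ⟨f, hf, hle⟩ := Stmt9Aux.exists_path ρ _ hs
      exact absurd ((hρ f hf).trans hle) (not_le.mpr hcon)
    calc ⨅ k : ℕ, (σs (k+1) : ℝ≥0∞) * (Stmt9Aux.Nn T (k+1) : ℝ≥0∞)
        = (⨅ k : ℕ, (σs (k+1) : ℝ≥0∞) * (Stmt9Aux.Nn T (k+1) : ℝ≥0∞)) * 1 := (mul_one _).symm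
      _ ≤ (⨅ k : ℕ, (σs (k+1) : ℝ≥0∞) * (Stmt9Aux.Nn T (k+1) : ℝ≥0∞))
            * ⨆ n, Stmt9Aux.Bsh T ρ n := mul_le_mul_right hS1 _
      _ = ⨆ n, (⨅ k : ℕ, (σs (k+1) : ℝ≥0∞) * (Stmt9Aux.Nn T (k+1) : ℝ≥0∞))
            * Stmt9Aux.Bsh T ρ n := ENNReal.mul_iSup _ _
      _ ≤ T.energy 1 (fun l => σs l.length) ρ :=
          iSup_le fun n => Stmt9Aux.energy_ge_M_mul_B hT σs ρ n
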